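/- arXiv:2012.10847 — 2 statements merged into one kernel-verified Lean document; each statement's English description precedes it below -/
import Mathlib

section
/- Let 0 < p < q < 1, let A, D > 0, x > 0, and let λ, a, d ∈ ℝ^n (with n ≥ 1). Define F(π) = α A x^p + δ D x^q + ⟨π, p A x^p (λ + a) + q D x^q (λ + d)⟩ + (1/2)‖π‖² ((p² - p) A x^p + (q² - q) D x^q) for π ∈ ℝ^n, where α = -(p/(2(1-p)))‖λ + a‖² and δ = -(q/(2(1-q)))‖λ + d‖². Then F is strictly concave, its maximizer is π* = (p A x^p (λ + a) + q D x^q (λ + d)) / (p(1-p) A x^p + q(1-q) D x^q), and the maximum value equals -(p q (1-p)(1-q) A D x^{p+q}) / (2(p(1-p) A x^p + q(1-q) D x^q)) · ‖(λ + a)/(1-p) - (λ + d)/(1-q)‖². In particular the maximum value is ≤ 0, with equality if and only if (λ + a)/(1-p) = (λ + d)/(1-q). -/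
open RealInnerProductSpace

set_option maxHeartbeats 1000000 in
/-- Drift maximization for a two-power mixture forward performance process. -/
theorem stmt2 {n : ℕ} (hn : 1 ≤ n) (p q A D x : ℝ)
    (hp : 0 < p) (hpq : p < q) (hq : q < 1) (hA : 0 < A) (hD : 0 < D) (hx : 0 < x)
    (lam a d : EuclideanSpace ℝ (Fin n)) :
    let α : ℝ := -(p / (2 * (1 - p))) * ‖lam + a‖ ^ 2
    let δ : ℝ := -(q / (2 * (1 - q))) * ‖lam + d‖ ^ 2
    let F : EuclideanSpace ℝ (Fin n) → ℝ := fun π =>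
      α * A * x ^ p + δ * D * x ^ q
        + (inner ℝ π ((p * A * x ^ p) • (lam + a) + (q * D * x ^ q) • (lam + d)) : ℝ)
        + (1 / 2) * ‖π‖ ^ 2 * ((p ^ 2 - p) * A * x ^ p + (q ^ 2 - q) * D * x ^ q)
    let πs : EuclideanSpace ℝ (Fin n) :=
      (p * (1 - p) * A * x ^ p + q * (1 - q) * D * x ^ q)⁻¹ •
        ((p * A * x ^ p) • (lam + a) + (q * D * x ^ q) • (lam + d))
    StrictConcaveOn ℝ Set.univ F ∧ (∀ π, F π ≤ F πs) ∧
      F πs = -(p * q * (1 - p) * (1 - q) * A * D * x ^ (p + q)) /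
          (2 * (p * (1 - p) * A * x ^ p + q * (1 - q) * D * x ^ q)) *
          ‖(1 - p)⁻¹ • (lam + a) - (1 - q)⁻¹ • (lam + d)‖ ^ 2 ∧
      F πs ≤ 0 ∧
      (F πs = 0 ↔ (1 - p)⁻¹ • (lam + a) = (1 - q)⁻¹ • (lam + d)) := by
  intro α δ F πs
  have hF : ∀ π : EuclideanSpace ℝ (Fin n), F π =
      (-(p / (2 * (1 - p))) * ‖lam + a‖ ^ 2) * A * x ^ p
        + (-(q / (2 * (1 - q))) * ‖lam + d‖ ^ 2) * D * x ^ q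
        + (inner ℝ π ((p * A * x ^ p) • (lam + a) + (q * D * x ^ q) • (lam + d)) : ℝ)
        + (1 / 2) * ‖π‖ ^ 2 * ((p ^ 2 - p) * A * x ^ p + (q ^ 2 - q) * D * x ^ q) :=
    fun _ => rfl
  have hπs : πs = (p * (1 - p) * A * x ^ p + q * (1 - q) * D * x ^ q)⁻¹ •
      ((p * A * x ^ p) • (lam + a) + (q * D * x ^ q) • (lam + d)) := rfl
  clear_value F πs
  have h1p : 0 < 1 - p := by linarith
  have h1q : 0 < 1 - q := by linarith
  have hq0 : 0 < q := lt_trans hp hpq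
  have hX : 0 < x ^ p := Real.rpow_pos_of_pos hx p
  have hY : 0 < x ^ q := Real.rpow_pos_of_pos hx q
  set u := lam + a with hu
  set w := lam + d with hw
  set s1 := p * A * x ^ p with hs1d
  set s2 := q * D * x ^ q with hs2d
  set v := s1 • u + s2 • w with hvd
  set K := p * (1 - p) * A * x ^ p + q * (1 - q) * D * x ^ q with hKd
  have hs1 : 0 < s1 := by positivity
  have hs2 : 0 < s2 := by positivity
  have hK : 0 < K := by
    rw [hKd]
    exact add_pos (mul_pos (mul_pos (mul_pos hp h1p) hA) hX)
      (mul_pos (mul_pos (mul_pos hq0 h1q) hD) hY)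
  have hvK : v = K • πs := by
    rw [hπs, smul_smul, mul_inv_cancel₀ hK.ne', one_smul]
  -- key pointwise identity
  have key : ∀ π : EuclideanSpace ℝ (Fin n), F π = F πs - K / 2 * ‖π - πs‖ ^ 2 := by
    intro π
    have h1 : (inner ℝ π (v) : ℝ) = K * (inner ℝ π (πs) : ℝ) := by rw [hvK, real_inner_smul_right]
    have h2 : (inner ℝ πs (v) : ℝ) = K * ‖πs‖ ^ 2 := by
      rw [hvK, real_inner_smul_right, real_inner_self_eq_norm_sq]
    have h3 : ‖π - πs‖ ^ 2 = ‖π‖ ^ 2 - 2 * (inner ℝ π (πs) : ℝ) + ‖πs‖ ^ 2 := norm_sub_sq_real π πs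
    rw [hF π, hF πs, h1, h2, h3, hKd]
    ring
  -- value at the maximizer
  have ha1 : (inner ℝ πs (v) : ℝ) = K⁻¹ * ‖v‖ ^ 2 := by
    rw [hπs, real_inner_smul_left, real_inner_self_eq_norm_sq]
  have ha2 : ‖πs‖ ^ 2 = K⁻¹ ^ 2 * ‖v‖ ^ 2 := by
    rw [hπs, norm_smul, Real.norm_eq_abs, abs_of_pos (inv_pos.mpr hK)]
    ring
  have hv2 : ‖v‖ ^ 2 = s1 ^ 2 * ‖u‖ ^ 2 + 2 * (s1 * (s2 * (inner ℝ u (w) : ℝ))) + s2 ^ 2 * ‖w‖ ^ 2 := by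
    rw [hvd, norm_add_sq_real, norm_smul, norm_smul, real_inner_smul_left,
      real_inner_smul_right, Real.norm_eq_abs, Real.norm_eq_abs, abs_of_pos hs1, abs_of_pos hs2]
    ring
  have he : ‖(1 - p)⁻¹ • u - (1 - q)⁻¹ • w‖ ^ 2 =
      (1 - p)⁻¹ ^ 2 * ‖u‖ ^ 2 - 2 * ((1 - p)⁻¹ * ((1 - q)⁻¹ * (inner ℝ u (w) : ℝ))) +
        (1 - q)⁻¹ ^ 2 * ‖w‖ ^ 2 := by
    rw [norm_sub_sq_real, norm_smul, norm_smul, real_inner_smul_left, real_inner_smul_right,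
      Real.norm_eq_abs, Real.norm_eq_abs, abs_of_pos (inv_pos.mpr h1p),
      abs_of_pos (inv_pos.mpr h1q)]
    ring
  have hxpq : x ^ (p + q) = x ^ p * x ^ q := Real.rpow_add hx p q
  have hval : F πs = -(p * q * (1 - p) * (1 - q) * A * D * x ^ (p + q)) / (2 * K) *
      ‖(1 - p)⁻¹ • u - (1 - q)⁻¹ • w‖ ^ 2 := by
    rw [hF πs, ha1, ha2, hv2, he, hxpq, hs1d, hs2d, hKd]
    field_simp
    ring
  refine ⟨⟨convex_univ, ?_⟩, ?_, hval, ?_, ?_⟩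
  · -- strict concavity
    intro π₁ _ π₂ _ hne t s ht hs hts
    have hC : t • π₁ + s • π₂ - πs = t • (π₁ - πs) + s • (π₂ - πs) := by
      calc t • π₁ + s • π₂ - πs = t • π₁ + s • π₂ - (t + s) • πs := by rw [hts, one_smul]
        _ = t • (π₁ - πs) + s • (π₂ - πs) := by rw [add_smul, smul_sub, smul_sub]; abel
    have hdiff : π₁ - πs - (π₂ - πs) = π₁ - π₂ := by abel
    have hd : (0 : ℝ) < ‖π₁ - πs - (π₂ - πs)‖ ^ 2 := by
      rw [hdiff]
      exact pow_pos (norm_pos_iff.mpr (sub_ne_zero.mpr hne)) 2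
    have hE1 : ‖t • (π₁ - πs) + s • (π₂ - πs)‖ ^ 2 =
        t ^ 2 * ‖π₁ - πs‖ ^ 2 + 2 * (t * (s * (inner ℝ (π₁ - πs) (π₂ - πs) : ℝ))) + s ^ 2 * ‖π₂ - πs‖ ^ 2 := by
      rw [norm_add_sq_real, norm_smul, norm_smul, real_inner_smul_left, real_inner_smul_right,
        Real.norm_eq_abs, Real.norm_eq_abs, abs_of_pos ht, abs_of_pos hs]
      ring
    have hE2 : ‖π₁ - πs - (π₂ - πs)‖ ^ 2 =
        ‖π₁ - πs‖ ^ 2 - 2 * (inner ℝ (π₁ - πs) (π₂ - πs) : ℝ) + ‖π₂ - πs‖ ^ 2 := norm_sub_sq_real _ _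
    have hmain : F (t • π₁ + s • π₂) =
        t * F π₁ + s * F π₂ + K / 2 * (t * s * ‖π₁ - πs - (π₂ - πs)‖ ^ 2) := by
      rw [key (t • π₁ + s • π₂), key π₁, key π₂, hC, hE1, hE2]
      linear_combination (-F πs - K / 2 * (t * ‖π₁ - πs‖ ^ 2 + s * ‖π₂ - πs‖ ^ 2)) * hts
    have hpos : 0 < K / 2 * (t * s * ‖π₁ - πs - (π₂ - πs)‖ ^ 2) := by
      have := mul_pos (mul_pos ht hs) hd
      positivity
    simp only [smul_eq_mul]
    linarith [hmain]
  · intro π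
    rw [key π]
    have h0 : 0 ≤ K / 2 * ‖π - πs‖ ^ 2 := by positivity
    linarith
  · rw [hval]
    have hN : 0 < p * q * (1 - p) * (1 - q) * A * D * x ^ (p + q) := by
      have := Real.rpow_pos_of_pos hx (p + q)
      positivity
    have h1 : -(p * q * (1 - p) * (1 - q) * A * D * x ^ (p + q)) / (2 * K) ≤ 0 := by
      exact div_nonpos_of_nonpos_of_nonneg (by linarith) (by linarith)
    exact mul_nonpos_iff.mpr (Or.inr ⟨h1, sq_nonneg _⟩)
  · rw [hval]
    have hN : 0 < p * q * (1 - p) * (1 - q) * A * D * x ^ (p + q) := by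
      have := Real.rpow_pos_of_pos hx (p + q)
      positivity
    have hc : -(p * q * (1 - p) * (1 - q) * A * D * x ^ (p + q)) / (2 * K) ≠ 0 := by
      apply div_ne_zero (by linarith) (by linarith)
    constructor
    · intro h
      have h0 : ‖(1 - p)⁻¹ • u - (1 - q)⁻¹ • w‖ ^ 2 = 0 := by
        rcases mul_eq_zero.mp h with h' | h'
        · exact absurd h' hc
        · exact h'
      have := pow_eq_zero_iff (n := 2) (by norm_num) |>.mp h0
      exact sub_eq_zero.mp (norm_eq_zero.mp this)
    · intro h
      rw [sub_eq_zero.mpr h]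
      simp
end

section
/- Let 0 < p < q < 1 and let λ, a, d ∈ ℝ^n. Suppose that for A, D, x > 0 the identity p² ‖λ+a‖² A² x^{2p} + 2 p q ⟨λ+a, λ+d⟩ A D x^{p+q} + q² ‖λ+d‖² D² x^{2q} = -(2 p(1-p) α A² x^{2p} + 2(p(1-p) δ + q(1-q) α) A D x^{p+q} + 2 q(1-q) δ D² x^{2q}) holds for all x > 0, where α, δ ∈ ℝ. Then α = -(p/(2(1-p)))‖λ+a‖², δ = -(q/(2(1-q)))‖λ+d‖², and (λ+a)/(1-p) = (λ+d)/(1-q). -/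
/-- Linear independence of three power functions with distinct exponents. -/
lemma tri_indep (e1 e2 e3 : ℝ) (h12 : e1 < e2) (h23 : e2 < e3) (c1 c2 c3 : ℝ)
    (H : ∀ x : ℝ, 0 < x → c1 * x ^ e1 + c2 * x ^ e2 + c3 * x ^ e3 = 0) :
    c1 = 0 ∧ c2 = 0 ∧ c3 = 0 := by
  have h1 := H 1 one_pos
  simp only [Real.one_rpow, mul_one] at h1
  have h2 := H 2 two_pos
  have h4 := H 4 (by norm_num)
  have h4e : ∀ r : ℝ, (4:ℝ) ^ r = ((2:ℝ) ^ r) ^ 2 := by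
    intro r
    rw [show (4:ℝ) = 2 * 2 by norm_num, Real.mul_rpow (by norm_num) (by norm_num)]
    ring
  rw [h4e, h4e, h4e] at h4
  set x := (2:ℝ) ^ e1 with hx
  set y := (2:ℝ) ^ e2 with hy
  set z := (2:ℝ) ^ e3 with hz
  have hxy : x < y := Real.rpow_lt_rpow_left_iff (by norm_num) |>.mpr h12
  have hyz : y < z := Real.rpow_lt_rpow_left_iff (by norm_num) |>.mpr h23
  have hc3 : c3 * ((z - x) * (z - y)) = 0 := by
    linear_combination h4 - (x + y) * h2 + x * y * h1
  have hc3' : c3 = 0 := by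
    rcases mul_eq_zero.mp hc3 with h | h
    · exact h
    · rcases mul_eq_zero.mp h with h' | h' <;> nlinarith
  subst hc3'
  have hc2 : c2 * (y - x) = 0 := by linear_combination h2 - x * h1
  have hc2' : c2 = 0 := by
    rcases mul_eq_zero.mp hc2 with h | h
    · exact h
    · nlinarith
  subst hc2'
  refine ⟨by linarith, rfl, rfl⟩


lemma aux_inv (P Q M N I : ℝ) (hP : P ≠ 0) (hQ : Q ≠ 0)
    (hrel : 2 * P * Q * I - P ^ 2 * N - Q ^ 2 * M = 0) :
    (P⁻¹) ^ 2 * M - 2 * P⁻¹ * Q⁻¹ * I + (Q⁻¹) ^ 2 * N = 0 := by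
  field_simp
  linear_combination (-1 : ℝ) * hrel

/-- Coefficient matching for the two-power mixture zero-drift identity. -/
theorem stmt3 {n : ℕ} (p q : ℝ) (hp : 0 < p) (hpq : p < q) (hq : q < 1)
    (lam a d : EuclideanSpace ℝ (Fin n)) (A D : ℝ) (hA : 0 < A) (hD : 0 < D)
    (α δ : ℝ)
    (h : ∀ x : ℝ, 0 < x →
      p ^ 2 * ‖lam + a‖ ^ 2 * A ^ 2 * x ^ (2 * p)
        + 2 * p * q * (inner ℝ (lam + a) (lam + d) : ℝ) * A * D * x ^ (p + q)
        + q ^ 2 * ‖lam + d‖ ^ 2 * D ^ 2 * x ^ (2 * q)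
      = -(2 * p * (1 - p) * α * A ^ 2 * x ^ (2 * p)
          + 2 * (p * (1 - p) * δ + q * (1 - q) * α) * A * D * x ^ (p + q)
          + 2 * q * (1 - q) * δ * D ^ 2 * x ^ (2 * q))) :
    α = -(p / (2 * (1 - p))) * ‖lam + a‖ ^ 2 ∧
    δ = -(q / (2 * (1 - q))) * ‖lam + d‖ ^ 2 ∧
    (1 - p)⁻¹ • (lam + a) = (1 - q)⁻¹ • (lam + d) := by
  have hq0 : 0 < q := lt_trans hp hpq
  have hp1 : (0:ℝ) < 1 - p := by linarith
  have hq1 : (0:ℝ) < 1 - q := by linarith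
  set M : ℝ := ‖lam + a‖ ^ 2 with hM
  set N : ℝ := ‖lam + d‖ ^ 2 with hN
  set I : ℝ := (inner ℝ (lam + a) (lam + d) : ℝ) with hI
  obtain ⟨hc1, hc2, hc3⟩ := tri_indep (2 * p) (p + q) (2 * q) (by linarith) (by linarith)
    (p ^ 2 * M * A ^ 2 + 2 * p * (1 - p) * α * A ^ 2)
    (2 * p * q * I * A * D + 2 * (p * (1 - p) * δ + q * (1 - q) * α) * A * D)
    (q ^ 2 * N * D ^ 2 + 2 * q * (1 - q) * δ * D ^ 2)
    (fun x hx => by linear_combination h x hx)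
  -- extract scalar equations
  have e1 : p * M + 2 * (1 - p) * α = 0 := by
    have h' : (p * M + 2 * (1 - p) * α) * (p * A ^ 2) = 0 := by linear_combination hc1
    rcases mul_eq_zero.mp h' with h'' | h''
    · exact h''
    · exact absurd h'' (mul_ne_zero hp.ne' (pow_ne_zero 2 hA.ne')).elim
  have e3 : q * N + 2 * (1 - q) * δ = 0 := by
    have h' : (q * N + 2 * (1 - q) * δ) * (q * D ^ 2) = 0 := by linear_combination hc3
    rcases mul_eq_zero.mp h' with h'' | h''
    · exact h''
    · exact absurd h'' (mul_ne_zero hq0.ne' (pow_ne_zero 2 hD.ne')).elim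
  have e2 : 2 * p * q * I + 2 * (p * (1 - p) * δ + q * (1 - q) * α) = 0 := by
    have h' : (2 * p * q * I + 2 * (p * (1 - p) * δ + q * (1 - q) * α)) * (A * D) = 0 := by
      linear_combination hc2
    rcases mul_eq_zero.mp h' with h'' | h''
    · exact h''
    · exact absurd h'' (mul_ne_zero hA.ne' hD.ne').elim
  have hα : α = -(p / (2 * (1 - p))) * M := by
    field_simp
    linarith [e1]
  have hδ : δ = -(q / (2 * (1 - q))) * N := by
    field_simp
    linarith [e3]
  refine ⟨hα, hδ, ?_⟩
  have hIrel : 2 * (1 - p) * (1 - q) * I - (1 - p) ^ 2 * N - (1 - q) ^ 2 * M = 0 := by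
    have h' : (2 * (1 - p) * (1 - q) * I - (1 - p) ^ 2 * N - (1 - q) ^ 2 * M) * (p * q) = 0 := by
      linear_combination (1 - p) * (1 - q) * e2 - p * (1 - p) ^ 2 * e3 - q * (1 - q) ^ 2 * e1
    rcases mul_eq_zero.mp h' with h'' | h''
    · exact h''
    · exact absurd h'' (mul_ne_zero hp.ne' hq0.ne').elim
  have hnorm : ‖(1 - p)⁻¹ • (lam + a) - (1 - q)⁻¹ • (lam + d)‖ ^ 2 = 0 := by
    rw [norm_sub_sq_real, norm_smul, norm_smul, real_inner_smul_left, real_inner_smul_right]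
    rw [Real.norm_eq_abs, Real.norm_eq_abs, abs_of_pos (inv_pos.mpr hp1),
      abs_of_pos (inv_pos.mpr hq1)]
    have expand : ((1 - p)⁻¹ * ‖lam + a‖) ^ 2 - 2 * ((1 - p)⁻¹ * ((1 - q)⁻¹ * I))
        + ((1 - q)⁻¹ * ‖lam + d‖) ^ 2
        = ((1 - p)⁻¹) ^ 2 * M - 2 * (1 - p)⁻¹ * (1 - q)⁻¹ * I + ((1 - q)⁻¹) ^ 2 * N := by
      rw [hM, hN]; ring
    rw [expand]
    exact aux_inv (1 - p) (1 - q) M N I hp1.ne' hq1.ne' hIrel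
  have : (1 - p)⁻¹ • (lam + a) - (1 - q)⁻¹ • (lam + d) = 0 := by
    rwa [pow_eq_zero_iff (by norm_num), norm_eq_zero] at hnorm
  exact sub_eq_zero.mp this
end
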